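/- There exists a constant C > 0 depending only on c₂ and c₃ such that the following holds. Let 2 ≤ D ≤ m and let w_1, …, w_m ∈ ℝ^D be unit vectors satisfying (A2) with constant c₂ and (A3) with constant c₃. If ŵ_1, …, ŵ_m ∈ ℝ^D are unit vectors with δ_max := max_{k∈[m]} min_{s∈{−1,1}} ‖s ŵ_k − w_k‖₂ ≤ D^{1/2}/(C m √(log m)), then the approximated weights satisfy (A2) with constant 2c₂, i.e. max_{k≠ℓ} ⟨ŵ_k, ŵ_ℓ⟩² ≤ 2c₂ log(m)/D. -/

import Mathlib

open scoped BigOperators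

noncomputable def opNorm {n : Type*} [Fintype n] [DecidableEq n] (A : Matrix n n ℝ) : ℝ :=
  ‖Matrix.toEuclideanCLM (𝕜 := ℝ) A‖

noncomputable def l2norm {d : ℕ} (v : Fin d → ℝ) : ℝ := Real.sqrt (∑ i, (v i) ^ 2)

def dot {d : ℕ} (v w : Fin d → ℝ) : ℝ := ∑ i, v i * w i

noncomputable def gram {D m : ℕ} (w : Fin m → Fin D → ℝ) (n : ℕ) :
    Matrix (Fin m) (Fin m) ℝ := Matrix.of fun k l => (dot (w k) (w l)) ^ n

lemma sq_add_two_le (A d : ℝ) (hA : 0 ≤ A) (hd : 0 ≤ d) (h : d ≤ A / 5) :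
    (A + 2 * d) ^ 2 ≤ 2 * A ^ 2 := by nlinarith

lemma abs_dot_le {d : ℕ} (v u : Fin d → ℝ) :
    |dot v u| ≤ l2norm v * l2norm u := by
  have h : (dot v u) ^ 2 ≤ (∑ i, v i ^ 2) * (∑ i, u i ^ 2) :=
    Finset.sum_mul_sq_le_sq_mul_sq _ _ _
  have h1 : (0:ℝ) ≤ ∑ i, v i ^ 2 := Finset.sum_nonneg fun i _ => sq_nonneg _
  calc |dot v u| = Real.sqrt ((dot v u) ^ 2) := (Real.sqrt_sq_eq_abs _).symm
    _ ≤ Real.sqrt ((∑ i, v i ^ 2) * (∑ i, u i ^ 2)) := Real.sqrt_le_sqrt h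
    _ = l2norm v * l2norm u := by rw [Real.sqrt_mul h1]; rfl

/-- Incoherence of approximated weights, part (A2): if the ground-truth unit weights satisfy
(A2) with constant `c₂` and (A3) with constant `c₃`, and the approximations are uniformly close
up to signs, then the approximated weights satisfy (A2) with constant `2c₂`. -/
theorem approx_weights_incoherence_A2
    (c₂ c₃ : ℝ) (hc₂ : 0 < c₂) (hc₃ : 0 < c₃) :
    ∃ C : ℝ, 0 < C ∧
      ∀ (D m : ℕ), 2 ≤ D → D ≤ m →
      ∀ (w wh : Fin m → Fin D → ℝ),
        (∀ k, ∑ i, (w k i) ^ 2 = 1) →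
        (∀ k, ∑ i, (wh k i) ^ 2 = 1) →
        (∀ k l, k ≠ l → (dot (w k) (w l)) ^ 2 ≤ c₂ * Real.log m / D) →
        (∀ n : ℕ, 2 ≤ n → IsUnit (gram w n) ∧ opNorm (gram w n)⁻¹ ≤ c₃) →
        (∀ k, min (l2norm (wh k - w k)) (l2norm (wh k + w k)) ≤
            Real.sqrt D / (C * m * Real.sqrt (Real.log m))) →
        ∀ k l, k ≠ l → (dot (wh k) (wh l)) ^ 2 ≤ 2 * c₂ * Real.log m / D := by
  have hsc₂ : 0 < Real.sqrt c₂ := Real.sqrt_pos.mpr hc₂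
  refine ⟨10 / Real.sqrt c₂ + 1, by positivity, ?_⟩
  set C : ℝ := 10 / Real.sqrt c₂ + 1 with hC
  have hCpos : 0 < C := by positivity
  intro D m hD hDm w wh hw hwh hA2 _ hclose k l hkl
  set L : ℝ := Real.log m with hLdef
  have hm2 : (2:ℕ) ≤ m := le_trans hD hDm
  have hmR : (2:ℝ) ≤ (m:ℝ) := by exact_mod_cast hm2
  have hDR : (2:ℝ) ≤ (D:ℝ) := by exact_mod_cast hD
  have hDmR : (D:ℝ) ≤ (m:ℝ) := by exact_mod_cast hDm
  have hDpos : (0:ℝ) < D := by linarith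
  have hLhalf : (1/2:ℝ) ≤ L := by
    have h2 : (0.6931471803:ℝ) < Real.log 2 := Real.log_two_gt_d9
    have : Real.log 2 ≤ Real.log m := Real.log_le_log (by norm_num) hmR
    linarith
  have hLpos : (0:ℝ) < L := by linarith
  have hsL : 0 < Real.sqrt L := Real.sqrt_pos.mpr hLpos
  have hsD : 0 < Real.sqrt D := Real.sqrt_pos.mpr hDpos
  set δ : ℝ := Real.sqrt D / (C * m * Real.sqrt L) with hδdef
  have hδpos : 0 < δ := by positivity
  set A : ℝ := Real.sqrt (c₂ * L / D) with hAdef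
  have hApos : 0 < A := Real.sqrt_pos.mpr (by positivity)
  have hA2eq : A ^ 2 = c₂ * L / D := Real.sq_sqrt (by positivity)
  -- key arithmetic: δ ≤ A / 5
  have hδA : δ ≤ A / 5 := by
    have hAeq : A = Real.sqrt c₂ * Real.sqrt L / Real.sqrt D := by
      rw [hAdef, Real.sqrt_div (by positivity), Real.sqrt_mul hc₂.le]
    rw [hAeq, hδdef]
    rw [div_div]
    rw [div_le_div_iff₀ (by positivity) (by positivity)]
    have hDD : Real.sqrt D * Real.sqrt D = (D:ℝ) := Real.mul_self_sqrt hDpos.le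
    have hLL : Real.sqrt L * Real.sqrt L = L := Real.mul_self_sqrt hLpos.le
    have hCc : Real.sqrt c₂ * C = 10 + Real.sqrt c₂ := by
      rw [hC]; field_simp
    -- goal: √D * (√D * 5) ≤ √c₂ * √L * (C * m * √L)
    have expand : Real.sqrt c₂ * Real.sqrt L * (C * (m:ℝ) * Real.sqrt L)
        = (10 + Real.sqrt c₂) * (m:ℝ) * L := by
      calc Real.sqrt c₂ * Real.sqrt L * (C * (m:ℝ) * Real.sqrt L)
          = (Real.sqrt c₂ * C) * (m:ℝ) * (Real.sqrt L * Real.sqrt L) := by ring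
        _ = (10 + Real.sqrt c₂) * (m:ℝ) * L := by rw [hCc, hLL]
    calc Real.sqrt D * (Real.sqrt D * 5) = 5 * (D:ℝ) := by rw [← mul_assoc, hDD]; ring
      _ ≤ (10 + Real.sqrt c₂) * (m:ℝ) * L := by
          have e2 : 5 * (m:ℝ) ≤ 10 * (m:ℝ) * L := by nlinarith [mul_nonneg (by linarith : (0:ℝ) ≤ (m:ℝ)) (by linarith : (0:ℝ) ≤ 2 * L - 1)]
          have e3 : 10 * (m:ℝ) * L ≤ (10 + Real.sqrt c₂) * (m:ℝ) * L := by
            nlinarith [mul_nonneg (mul_nonneg hsc₂.le (by linarith : (0:ℝ) ≤ (m:ℝ))) hLpos.le]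
          linarith
      _ = _ := expand.symm
  -- choose signs
  have hsign : ∀ j : Fin m, ∃ s : ℝ, s ^ 2 = 1 ∧
      l2norm (fun i => s * wh j i - w j i) ≤ δ := by
    intro j
    rcases min_le_iff.mp (hclose j) with h | h
    · refine ⟨1, one_pow 2, ?_⟩
      have : (fun i => (1:ℝ) * wh j i - w j i) = wh j - w j := by
        funext i; simp
      rw [this]; exact h
    · refine ⟨-1, by norm_num, ?_⟩
      have : l2norm (fun i => (-1:ℝ) * wh j i - w j i) = l2norm (wh j + w j) := by
        unfold l2norm
        congr 1
        exact Finset.sum_congr rfl fun i _ => by simp [Pi.add_apply]; ring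
      rw [this]; exact h
  obtain ⟨s, hs2, hsk⟩ := hsign k
  obtain ⟨t, ht2, htl⟩ := hsign l
  set a : Fin D → ℝ := fun i => s * wh k i with ha
  set b : Fin D → ℝ := fun i => t * wh l i with hb
  have hab : (dot a b) ^ 2 = (dot (wh k) (wh l)) ^ 2 := by
    have : dot a b = (s * t) * dot (wh k) (wh l) := by
      unfold dot
      rw [Finset.mul_sum]
      exact Finset.sum_congr rfl fun i _ => by ring
    rw [this, mul_pow, mul_pow, hs2, ht2]; ring
  have hanorm : l2norm a = 1 := by
    have : ∑ i, a i ^ 2 = 1 := by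
      have : ∑ i, a i ^ 2 = s ^ 2 * ∑ i, wh k i ^ 2 := by
        rw [Finset.mul_sum]
        exact Finset.sum_congr rfl fun i _ => by rw [ha]; ring
      rw [this, hs2, hwh k]; ring
    unfold l2norm; rw [this, Real.sqrt_one]
  have hwlnorm : l2norm (w l) = 1 := by
    unfold l2norm; rw [hw l, Real.sqrt_one]
  -- decomposition
  have hdec : dot a b = dot (w k) (w l) + dot (fun i => a i - w k i) (w l)
      + dot a (fun i => b i - w l i) := by
    unfold dot
    rw [← Finset.sum_add_distrib, ← Finset.sum_add_distrib]
    exact Finset.sum_congr rfl fun i _ => by ring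
  have h1 : |dot (w k) (w l)| ≤ A := by
    have := hA2 k l hkl
    calc |dot (w k) (w l)| = Real.sqrt ((dot (w k) (w l)) ^ 2) :=
          (Real.sqrt_sq_eq_abs _).symm
      _ ≤ A := Real.sqrt_le_sqrt this
  have h2 : |dot (fun i => a i - w k i) (w l)| ≤ δ := by
    have h := abs_dot_le (fun i => a i - w k i) (w l)
    have heq : (fun i => a i - w k i) = fun i => s * wh k i - w k i := by
      funext i; rw [ha]
    rw [heq, hwlnorm, mul_one] at h
    exact h.trans hsk
  have h3 : |dot a (fun i => b i - w l i)| ≤ δ := by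
    have h := abs_dot_le a (fun i => b i - w l i)
    have heq : (fun i => b i - w l i) = fun i => t * wh l i - w l i := by
      funext i; rw [hb]
    rw [hanorm, one_mul, heq] at h
    exact h.trans htl
  have habs : |dot a b| ≤ A + 2 * δ := by
    calc |dot a b| ≤ |dot (w k) (w l)| + |dot (fun i => a i - w k i) (w l)|
          + |dot a (fun i => b i - w l i)| := by
          rw [hdec]; exact (abs_add_le _ _).trans (add_le_add_left (abs_add_le _ _) _)
      _ ≤ A + 2 * δ := by linarith
  have hfinal : (dot a b) ^ 2 ≤ 2 * (c₂ * L / D) := by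
    have h4 : (dot a b) ^ 2 ≤ (A + 2 * δ) ^ 2 := by
      rw [← sq_abs]
      exact pow_le_pow_left₀ (abs_nonneg _) habs 2
    have h5 : (A + 2 * δ) ^ 2 ≤ 2 * A ^ 2 := sq_add_two_le A δ hApos.le hδpos.le hδA
    rw [← hA2eq]; linarith
  rw [← hab]
  calc (dot a b) ^ 2 ≤ 2 * (c₂ * L / D) := hfinal
    _ = 2 * c₂ * L / D := by ring
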